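/- Let S (states) and A (actions) be finite nonempty types, let γ be a real number with 0 < γ < 1, let r_max > 0, set c = r_max/(1−γ), and let μ₀ be a probability vector on S. Let T, T̂ : S → A → S → ℝ be transition kernels and let r : S → A → ℝ satisfy |r s a| ≤ r_max for all s, a. For a policy π and dynamics K ∈ {T, T̂}, let P_{K,π} be the induced state-transition matrix and ρ^π_K the normalized state–action occupancy, and let η_M(π) = ∑_{s,a} ρ^π_T(s,a) · r s a be the normalized true return. Let u, û : S → A → ℝ and ε_density ≥ 0 satisfy |u s' a − û s' a| ≤ ε_density for all s', a, and set U(s,a) = ∑_{s'} T̂ s a s' · u s' a and Û(s,a) = ∑_{s'} T̂ s a s' · û s' a. Assume there exist C > 0 and ε_approx ≥ 0 such that for all (s,a) and all f : S → ℝ with |f s'| ≤ 1 for all s', one has |∑_{s'} (T̂ s a s' − T s a s') · f s'| ≤ C · U(s,a) + ε_approx. Set λ = γ·c·C. Suppose π̂ is a policy maximizing the regularized model return, i.e., for every policy π, ∑_{s,a} ρ^{π̂}_{T̂}(s,a) · (r s a − λ·Û(s,a)) ≥ ∑_{s,a} ρ^π_{T̂}(s,a) · (r s a − λ·Û(s,a)).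 Then for every δ ≥ 0 and every policy π with ∑_{s,a} ρ^π_{T̂}(s,a) · U(s,a) ≤ δ + ε_density, it holds that η_M(π̂) ≥ η_M(π) − 2λ·(δ + 2·ε_density) − 2·γ·c·ε_approx. -/

import Mathlib

/-- A transition kernel on finite state and action spaces. -/
def IsKernel {S A : Type*} [Fintype S] (K : S → A → S → ℝ) : Prop :=
  (∀ s a s', 0 ≤ K s a s') ∧ ∀ s a, ∑ s', K s a s' = 1

/-- A (stationary, stochastic) policy. -/
def IsPolicy {S A : Type*} [Fintype A] (π : S → A → ℝ) : Prop :=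
  (∀ s a, 0 ≤ π s a) ∧ ∀ s, ∑ a, π s a = 1

/-- The state-transition matrix induced by dynamics `K` and policy `π`. -/
noncomputable def stateMatrix {S A : Type*} [Fintype A]
    (K : S → A → S → ℝ) (π : S → A → ℝ) : Matrix S S ℝ :=
  fun s s' => ∑ a, π s a * K s a s'

/-- The normalized discounted state–action occupancy of `μ₀` under dynamics `K`
and policy `π`. -/
noncomputable def occupancy {S A : Type*} [Fintype S] [Fintype A] [DecidableEq S]
    (γ : ℝ) (μ₀ : S → ℝ) (K : S → A → S → ℝ) (π : S → A → ℝ) (s : S) (a : A) : ℝ :=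
  (1 - γ) * ∑' t : ℕ, γ ^ t * Matrix.vecMul μ₀ (stateMatrix K π ^ t) s * π s a

set_option linter.unusedSectionVars false

namespace OGap

variable {S A : Type*} [Fintype S] [Fintype A] [DecidableEq S]

def Stoch (P : Matrix S S ℝ) : Prop := (∀ i j, 0 ≤ P i j) ∧ ∀ i, ∑ j, P i j = 1

def ProbVec (μ : S → ℝ) : Prop := (∀ x, 0 ≤ μ x) ∧ ∑ x, μ x = 1

lemma Stoch.mul {P Q : Matrix S S ℝ} (hP : Stoch P) (hQ : Stoch Q) : Stoch (P * Q) := by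
  constructor
  · intro i j
    rw [Matrix.mul_apply]
    exact Finset.sum_nonneg fun k _ => mul_nonneg (hP.1 i k) (hQ.1 k j)
  · intro i
    simp only [Matrix.mul_apply]
    rw [Finset.sum_comm]
    simp only [← Finset.mul_sum]
    simp [hQ.2, hP.2 i]

lemma Stoch.pow {P : Matrix S S ℝ} (hP : Stoch P) (t : ℕ) : Stoch (P ^ t) := by
  induction t with
  | zero =>
    constructor
    · intro i j; simp [Matrix.one_apply]; split <;> norm_num
    · intro i; simp [Matrix.one_apply]
  | succ n ih => rw [pow_succ]; exact ih.mul hP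

lemma ProbVec.vecMul {μ : S → ℝ} (hμ : ProbVec μ) {P : Matrix S S ℝ} (hP : Stoch P) :
    ProbVec (Matrix.vecMul μ P) := by
  constructor
  · intro j
    simp only [Matrix.vecMul, dotProduct]
    exact Finset.sum_nonneg fun i _ => mul_nonneg (hμ.1 i) (hP.1 i j)
  · simp only [Matrix.vecMul, dotProduct]
    rw [Finset.sum_comm]
    simp only [← Finset.mul_sum]
    simp [hP.2, hμ.2]

lemma ProbVec.vecMul_pow {μ : S → ℝ} (hμ : ProbVec μ) {P : Matrix S S ℝ} (hP : Stoch P)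
    (t : ℕ) : ProbVec (Matrix.vecMul μ (P ^ t)) := hμ.vecMul (hP.pow t)

lemma ProbVec.le_one {μ : S → ℝ} (hμ : ProbVec μ) (s : S) : μ s ≤ 1 := by
  calc μ s ≤ ∑ x, μ x := Finset.single_le_sum (fun i _ => hμ.1 i) (Finset.mem_univ s)
  _ = 1 := hμ.2


noncomputable def dvec (γ : ℝ) (μ₀ : S → ℝ) (P : Matrix S S ℝ) (s : S) : ℝ :=
  ∑' t : ℕ, γ ^ t * Matrix.vecMul μ₀ (P ^ t) s

variable {γ : ℝ} {μ₀ : S → ℝ} {P : Matrix S S ℝ}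

lemma dvec_summable (hγ0 : 0 < γ) (hγ1 : γ < 1) (hμ : ProbVec μ₀) (hP : Stoch P) (s : S) :
    Summable (fun t : ℕ => γ ^ t * Matrix.vecMul μ₀ (P ^ t) s) := by
  apply Summable.of_nonneg_of_le
    (fun t => mul_nonneg (pow_nonneg hγ0.le t) ((hμ.vecMul_pow hP t).1 s))
    (fun t => ?_) (summable_geometric_of_lt_one hγ0.le hγ1)
  calc γ ^ t * Matrix.vecMul μ₀ (P ^ t) s ≤ γ ^ t * 1 :=
        mul_le_mul_of_nonneg_left ((hμ.vecMul_pow hP t).le_one s) (pow_nonneg hγ0.le t)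
  _ = γ ^ t := mul_one _

lemma dvec_nonneg (hγ0 : 0 < γ) (hμ : ProbVec μ₀) (hP : Stoch P) (s : S) :
    0 ≤ dvec γ μ₀ P s :=
  tsum_nonneg fun t => mul_nonneg (pow_nonneg hγ0.le t) ((hμ.vecMul_pow hP t).1 s)

lemma dvec_sum (hγ0 : 0 < γ) (hγ1 : γ < 1) (hμ : ProbVec μ₀) (hP : Stoch P) :
    ∑ s, dvec γ μ₀ P s = (1 - γ)⁻¹ := by
  unfold dvec
  rw [← Summable.tsum_finsetSum (fun s _ => dvec_summable hγ0 hγ1 hμ hP s)]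
  have : ∀ t : ℕ, ∑ s, γ ^ t * Matrix.vecMul μ₀ (P ^ t) s = γ ^ t := by
    intro t
    rw [← Finset.mul_sum, (hμ.vecMul_pow hP t).2, mul_one]
  simp only [this]
  exact tsum_geometric_of_lt_one hγ0.le hγ1

lemma dvec_flow (hγ0 : 0 < γ) (hγ1 : γ < 1) (hμ : ProbVec μ₀) (hP : Stoch P) (s : S) :
    dvec γ μ₀ P s = μ₀ s + γ * ∑ s'', dvec γ μ₀ P s'' * P s'' s := by
  unfold dvec
  rw [Summable.tsum_eq_zero_add (dvec_summable hγ0 hγ1 hμ hP s)]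
  congr 1
  · simp [Matrix.vecMul_one]
  · have key : ∀ n : ℕ, γ ^ (n + 1) * Matrix.vecMul μ₀ (P ^ (n + 1)) s =
        γ * ∑ s'', (γ ^ n * Matrix.vecMul μ₀ (P ^ n) s'') * P s'' s := by
      intro n
      rw [show P ^ (n+1) = P ^ n * P from pow_succ P n, ← Matrix.vecMul_vecMul]
      have h2 : Matrix.vecMul (Matrix.vecMul μ₀ (P ^ n)) P s
          = ∑ s'', Matrix.vecMul μ₀ (P ^ n) s'' * P s'' s := by
        simp [Matrix.vecMul, dotProduct]
      rw [h2, Finset.mul_sum, Finset.mul_sum]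
      refine Finset.sum_congr rfl fun s'' _ => ?_
      ring
    simp only [key]
    rw [tsum_mul_left]
    congr 1
    rw [Summable.tsum_finsetSum (fun s'' _ => ((dvec_summable hγ0 hγ1 hμ hP s'').mul_right (P s'' s)))]
    exact Finset.sum_congr rfl fun s'' _ => tsum_mul_right


noncomputable def vval (γ : ℝ) (P : Matrix S S ℝ) (R : S → ℝ) (s : S) : ℝ :=
  ∑' t : ℕ, γ ^ t * (P ^ t).mulVec R s

variable {R : S → ℝ} {r_max : ℝ}

lemma mulVec_pow_abs_le (hP : Stoch P) (hR : ∀ s, |R s| ≤ r_max) (t : ℕ) (s : S) :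
    |(P ^ t).mulVec R s| ≤ r_max := by
  induction t generalizing s with
  | zero => simpa [Matrix.one_mulVec] using hR s
  | succ n ih =>
    rw [show P ^ (n+1) = P * P ^ n from pow_succ' P n, ← Matrix.mulVec_mulVec]
    have h1 : |Matrix.mulVec P ((P ^ n).mulVec R) s|
        ≤ ∑ j, |P s j * (P ^ n).mulVec R j| := by
      simpa [Matrix.mulVec, dotProduct] using
        Finset.abs_sum_le_sum_abs (fun j => P s j * (P ^ n).mulVec R j) Finset.univ
    refine h1.trans ?_
    calc ∑ j, |P s j * (P ^ n).mulVec R j| ≤ ∑ j, P s j * r_max := by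
          refine Finset.sum_le_sum fun j _ => ?_
          rw [abs_mul, abs_of_nonneg (hP.1 s j)]
          exact mul_le_mul_of_nonneg_left (ih j) (hP.1 s j)
    _ = r_max := by rw [← Finset.sum_mul, hP.2 s, one_mul]

lemma vval_summable (hγ0 : 0 < γ) (hγ1 : γ < 1) (hP : Stoch P) (hR : ∀ s, |R s| ≤ r_max)
    (s : S) : Summable (fun t : ℕ => γ ^ t * (P ^ t).mulVec R s) := by
  refine Summable.of_abs (Summable.of_nonneg_of_le (fun t => abs_nonneg _) (fun t => ?_)
    ((summable_geometric_of_lt_one hγ0.le hγ1).mul_right r_max))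
  rw [abs_mul, abs_pow, abs_of_pos hγ0]
  exact mul_le_mul_of_nonneg_left (mulVec_pow_abs_le hP hR t s) (pow_nonneg hγ0.le t)

lemma vval_abs_le (hγ0 : 0 < γ) (hγ1 : γ < 1) (hP : Stoch P) (hR : ∀ s, |R s| ≤ r_max)
    (s : S) : |vval γ P R s| ≤ r_max / (1 - γ) := by
  have habs : Summable (fun t : ℕ => |γ ^ t * (P ^ t).mulVec R s|) :=
    (vval_summable hγ0 hγ1 hP hR s).abs
  have h1 : |vval γ P R s| ≤ ∑' t : ℕ, |γ ^ t * (P ^ t).mulVec R s| := by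
    simpa only [Real.norm_eq_abs, vval] using norm_tsum_le_tsum_norm (f := fun t : ℕ => γ ^ t * (P ^ t).mulVec R s) (by simpa only [Real.norm_eq_abs] using habs)
  refine h1.trans ?_
  have h2 : ∑' t : ℕ, |γ ^ t * (P ^ t).mulVec R s| ≤ ∑' t : ℕ, γ ^ t * r_max := by
    refine Summable.tsum_le_tsum (fun t => ?_) habs ((summable_geometric_of_lt_one hγ0.le hγ1).mul_right r_max)
    rw [abs_mul, abs_pow, abs_of_pos hγ0]
    exact mul_le_mul_of_nonneg_left (mulVec_pow_abs_le hP hR t s) (pow_nonneg hγ0.le t)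
  refine h2.trans_eq ?_
  rw [tsum_mul_right, tsum_geometric_of_lt_one hγ0.le hγ1, div_eq_mul_inv, mul_comm]

lemma vval_bellman (hγ0 : 0 < γ) (hγ1 : γ < 1) (hP : Stoch P) (hR : ∀ s, |R s| ≤ r_max)
    (s : S) : vval γ P R s = R s + γ * ∑ s', P s s' * vval γ P R s' := by
  unfold vval
  rw [Summable.tsum_eq_zero_add (vval_summable hγ0 hγ1 hP hR s)]
  congr 1
  · simp [Matrix.one_mulVec]
  · have key : ∀ n : ℕ, γ ^ (n + 1) * (P ^ (n + 1)).mulVec R s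
        = γ * ∑ s', P s s' * (γ ^ n * (P ^ n).mulVec R s') := by
      intro n
      rw [show P ^ (n+1) = P * P ^ n from pow_succ' P n, ← Matrix.mulVec_mulVec]
      have h2 : Matrix.mulVec P ((P ^ n).mulVec R) s
          = ∑ s', P s s' * (P ^ n).mulVec R s' := by
        simp [Matrix.mulVec, dotProduct]
      rw [h2, Finset.mul_sum, Finset.mul_sum]
      refine Finset.sum_congr rfl fun s' _ => ?_
      ring
    simp only [key]
    rw [tsum_mul_left]
    congr 1
    rw [Summable.tsum_finsetSum (fun s' _ => ((vval_summable hγ0 hγ1 hP hR s').mul_left (P s s')))]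
    exact Finset.sum_congr rfl fun s' _ => tsum_mul_left

lemma pairing (hγ0 : 0 < γ) (hγ1 : γ < 1) (hμ : ProbVec μ₀) (hP : Stoch P)
    (hR : ∀ s, |R s| ≤ r_max) :
    ∑ s, μ₀ s * vval γ P R s = ∑ s, dvec γ μ₀ P s * R s := by
  unfold vval dvec
  calc ∑ s, μ₀ s * ∑' t : ℕ, γ ^ t * (P ^ t).mulVec R s
      = ∑ s, ∑' t : ℕ, μ₀ s * (γ ^ t * (P ^ t).mulVec R s) := by
        exact Finset.sum_congr rfl fun s _ => (tsum_mul_left).symm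
    _ = ∑' t : ℕ, ∑ s, μ₀ s * (γ ^ t * (P ^ t).mulVec R s) := by
        exact (Summable.tsum_finsetSum (fun s _ => (vval_summable hγ0 hγ1 hP hR s).mul_left (μ₀ s))).symm
    _ = ∑' t : ℕ, ∑ s, (γ ^ t * Matrix.vecMul μ₀ (P ^ t) s) * R s := by
        refine tsum_congr fun t => ?_
        have := Matrix.dotProduct_mulVec μ₀ (P ^ t) R
        simp only [dotProduct] at this
        calc ∑ s, μ₀ s * (γ ^ t * (P ^ t).mulVec R s)
            = γ ^ t * ∑ s, μ₀ s * (P ^ t).mulVec R s := by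
              rw [Finset.mul_sum]; exact Finset.sum_congr rfl fun s _ => by ring
          _ = γ ^ t * ∑ s, Matrix.vecMul μ₀ (P ^ t) s * R s := by rw [this]
          _ = ∑ s, (γ ^ t * Matrix.vecMul μ₀ (P ^ t) s) * R s := by
              rw [Finset.mul_sum]; exact Finset.sum_congr rfl fun s _ => by ring
    _ = ∑ s, ∑' t : ℕ, (γ ^ t * Matrix.vecMul μ₀ (P ^ t) s) * R s := by
        exact Summable.tsum_finsetSum (fun s _ => (dvec_summable hγ0 hγ1 hμ hP s).mul_right (R s))
    _ = ∑ s, (∑' t : ℕ, γ ^ t * Matrix.vecMul μ₀ (P ^ t) s) * R s := by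
        exact Finset.sum_congr rfl fun s _ => tsum_mul_right


/-- Key finite-algebra identity combining the flow equation for `wh` (dynamics `Ph`)
and the Bellman equation for `v` (dynamics `P`). -/
lemma identity {wh v R μ₀ : S → ℝ} {P Ph : Matrix S S ℝ} {γ : ℝ}
    (hflow : ∀ s, wh s = μ₀ s + γ * ∑ s'', wh s'' * Ph s'' s)
    (hbell : ∀ s, v s = R s + γ * ∑ s', P s s' * v s') :
    ∑ s, wh s * R s =
      ∑ s, μ₀ s * v s - γ * ∑ s, wh s * ∑ s', (P s s' - Ph s s') * v s' := by
  have hR : ∀ s, R s = v s - γ * ∑ s', P s s' * v s' := by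
    intro s; have := hbell s; linarith
  set X := ∑ s, wh s * ∑ s', P s s' * v s' with hX
  set Y := ∑ s, wh s * ∑ s', Ph s s' * v s' with hY
  have c1 : ∑ s, wh s * R s = ∑ s, wh s * v s - γ * X := by
    rw [hX, Finset.mul_sum, ← Finset.sum_sub_distrib]
    refine Finset.sum_congr rfl fun s _ => ?_
    rw [hR s]; ring
  have c2 : γ * Y = ∑ s, wh s * v s - ∑ s, μ₀ s * v s := by
    have : ∑ s', (wh s' - μ₀ s') * v s' = γ * Y := by
      have e : ∀ s', (wh s' - μ₀ s') * v s' = γ * ∑ s, (wh s * Ph s s') * v s' := by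
        intro s'
        have := hflow s'
        have h1 : wh s' - μ₀ s' = γ * ∑ s, wh s * Ph s s' := by linarith
        rw [h1, mul_assoc, Finset.sum_mul, Finset.mul_sum]
      rw [Finset.sum_congr rfl fun s' _ => e s']
      rw [← Finset.mul_sum, hY, Finset.sum_comm]
      congr 1
      refine Finset.sum_congr rfl fun s _ => ?_
      rw [Finset.mul_sum]
      exact Finset.sum_congr rfl fun s' _ => by ring
    rw [← this, ← Finset.sum_sub_distrib]
    exact Finset.sum_congr rfl fun s _ => by ring
  have c3 : ∑ s, wh s * ∑ s', (P s s' - Ph s s') * v s' = X - Y := by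
    rw [hX, hY, ← Finset.sum_sub_distrib]
    refine Finset.sum_congr rfl fun s _ => ?_
    rw [← mul_sub, ← Finset.sum_sub_distrib]
    congr 1
    exact Finset.sum_congr rfl fun s' _ => by ring
  rw [c1, c3]
  linarith


section Sim

variable {S A : Type*} [Fintype S] [Fintype A] [DecidableEq S]

lemma stoch_stateMatrix {K : S → A → S → ℝ} {π : S → A → ℝ}
    (hK : IsKernel K) (hπ : IsPolicy π) : Stoch (stateMatrix K π) := by
  constructor
  · intro i j
    exact Finset.sum_nonneg fun a _ => mul_nonneg (hπ.1 i a) (hK.1 i a j)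
  · intro i
    unfold stateMatrix
    rw [Finset.sum_comm]
    simp only [← Finset.mul_sum]
    simp [hK.2, hπ.2 i]

lemma occupancy_eq {γ : ℝ} {μ₀ : S → ℝ} (K : S → A → S → ℝ) (π : S → A → ℝ) (s : S) (a : A) :
    occupancy γ μ₀ K π s a = (1 - γ) * (dvec γ μ₀ (stateMatrix K π) s * π s a) := by
  unfold occupancy dvec
  rw [tsum_mul_right]

lemma occ_pair {γ : ℝ} {μ₀ : S → ℝ} (K : S → A → S → ℝ) (π : S → A → ℝ) (g : S → A → ℝ) :
    ∑ s, ∑ a, occupancy γ μ₀ K π s a * g s a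
      = (1 - γ) * ∑ s, dvec γ μ₀ (stateMatrix K π) s * (∑ a, π s a * g s a) := by
  rw [Finset.mul_sum]
  refine Finset.sum_congr rfl fun s _ => ?_
  rw [Finset.mul_sum, Finset.mul_sum]
  refine Finset.sum_congr rfl fun a _ => ?_
  rw [occupancy_eq]
  ring


lemma sim_bound (γ : ℝ) (hγ0 : 0 < γ) (hγ1 : γ < 1)
    (r_max : ℝ) (hr_max : 0 < r_max) (c : ℝ) (hc : c = r_max / (1 - γ))
    (μ₀ : S → ℝ) (hμ : ProbVec μ₀)
    (T That : S → A → S → ℝ) (hT : IsKernel T) (hThat : IsKernel That)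
    (r : S → A → ℝ) (hr : ∀ s a, |r s a| ≤ r_max)
    (U : S → A → ℝ) (C : ℝ) (hC : 0 < C) (ε_approx : ℝ) (hεa : 0 ≤ ε_approx)
    (hmodel : ∀ s a, ∀ f : S → ℝ, (∀ s', |f s'| ≤ 1) →
      |∑ s', (That s a s' - T s a s') * f s'| ≤ C * U s a + ε_approx)
    (π : S → A → ℝ) (hπ : IsPolicy π) :
    |(∑ s, ∑ a, occupancy γ μ₀ T π s a * r s a) -
        ∑ s, ∑ a, occupancy γ μ₀ That π s a * r s a|
      ≤ γ * c * C * (∑ s, ∑ a, occupancy γ μ₀ That π s a * U s a) + γ * c * ε_approx := by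
  have h1γ : (0:ℝ) < 1 - γ := by linarith
  have hc0 : 0 < c := by rw [hc]; positivity
  set Pm := stateMatrix T π with hPmdef
  set Ph := stateMatrix That π with hPhdef
  have hPm : Stoch Pm := stoch_stateMatrix hT hπ
  have hPh : Stoch Ph := stoch_stateMatrix hThat hπ
  set R : S → ℝ := fun s => ∑ a, π s a * r s a with hRdef
  have hR : ∀ s, |R s| ≤ r_max := by
    intro s
    calc |R s| ≤ ∑ a, |π s a * r s a| := Finset.abs_sum_le_sum_abs _ _
      _ ≤ ∑ a, π s a * r_max := by
          refine Finset.sum_le_sum fun a _ => ?_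
          rw [abs_mul, abs_of_nonneg (hπ.1 s a)]
          exact mul_le_mul_of_nonneg_left (hr s a) (hπ.1 s a)
      _ = r_max := by rw [← Finset.sum_mul, hπ.2 s, one_mul]
  set v : S → ℝ := vval γ Pm R with hvdef
  have hvb : ∀ s, |v s| ≤ c := by
    intro s; rw [hc]; exact vval_abs_le hγ0 hγ1 hPm hR s
  set wh : S → ℝ := dvec γ μ₀ Ph with hwhdef
  have hwh0 : ∀ s, 0 ≤ wh s := fun s => dvec_nonneg hγ0 hμ hPh s
  set Δ : S → ℝ := fun s => ∑ s', (Pm s s' - Ph s s') * v s' with hΔdef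
  -- return identities
  have eT : (∑ s, ∑ a, occupancy γ μ₀ T π s a * r s a) = (1 - γ) * ∑ s, μ₀ s * v s := by
    rw [occ_pair, pairing hγ0 hγ1 hμ hPm hR]
  have eH : (∑ s, ∑ a, occupancy γ μ₀ That π s a * r s a)
      = (1 - γ) * (∑ s, μ₀ s * v s - γ * ∑ s, wh s * Δ s) := by
    rw [occ_pair]
    congr 1
    exact identity (fun s => dvec_flow hγ0 hγ1 hμ hPh s)
      (fun s => vval_bellman hγ0 hγ1 hPm hR s)
  -- bound on Δ
  have hΔ : ∀ s, |Δ s| ≤ ∑ a, π s a * (c * (C * U s a + ε_approx)) := by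
    intro s
    have hre : Δ s = ∑ a, π s a * ∑ s', (T s a s' - That s a s') * v s' := by
      rw [hΔdef]
      simp only [hPmdef, hPhdef]
      unfold stateMatrix
      calc ∑ x, ((∑ a, π s a * T s a x) - ∑ a, π s a * That s a x) * v x
          = ∑ x, ∑ a, π s a * ((T s a x - That s a x) * v x) := by
            refine Finset.sum_congr rfl fun x _ => ?_
            rw [← Finset.sum_sub_distrib, Finset.sum_mul]
            exact Finset.sum_congr rfl fun a _ => by ring
        _ = ∑ a, ∑ x, π s a * ((T s a x - That s a x) * v x) := Finset.sum_comm
        _ = ∑ a, π s a * ∑ x, (T s a x - That s a x) * v x := by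
            exact Finset.sum_congr rfl fun a _ => (Finset.mul_sum _ _ _).symm
    have hinner : ∀ a, |∑ s', (T s a s' - That s a s') * v s'| ≤ c * (C * U s a + ε_approx) := by
      intro a
      have hf : ∀ s', |v s' / c| ≤ 1 := by
        intro s'
        rw [abs_div, abs_of_pos hc0]
        exact div_le_one_of_le₀ (hvb s') hc0.le
      have hm := hmodel s a (fun s' => v s' / c) hf
      have hsum : ∑ s', (That s a s' - T s a s') * (v s' / c)
          = (∑ s', (That s a s' - T s a s') * v s') / c := by
        rw [Finset.sum_div]
        exact Finset.sum_congr rfl fun s' _ => (mul_div_assoc _ _ _).symm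
      rw [hsum, abs_div, abs_of_pos hc0, div_le_iff₀ hc0] at hm
      have hneg : (∑ s', (T s a s' - That s a s') * v s')
          = -(∑ s', (That s a s' - T s a s') * v s') := by
        rw [← Finset.sum_neg_distrib]
        exact Finset.sum_congr rfl fun s' _ => by ring
      rw [hneg, abs_neg]
      calc |∑ s', (That s a s' - T s a s') * v s'| ≤ (C * U s a + ε_approx) * c := hm
        _ = c * (C * U s a + ε_approx) := mul_comm _ _
    rw [hre]
    calc |∑ a, π s a * ∑ s', (T s a s' - That s a s') * v s'|
        ≤ ∑ a, |π s a * ∑ s', (T s a s' - That s a s') * v s'| :=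
          Finset.abs_sum_le_sum_abs _ _
      _ ≤ ∑ a, π s a * (c * (C * U s a + ε_approx)) := by
          refine Finset.sum_le_sum fun a _ => ?_
          rw [abs_mul, abs_of_nonneg (hπ.1 s a)]
          exact mul_le_mul_of_nonneg_left (hinner a) (hπ.1 s a)
  -- bound on the inner product
  set B : ℝ := ∑ s, wh s * ∑ a, π s a * U s a with hBdef
  have eJU : (∑ s, ∑ a, occupancy γ μ₀ That π s a * U s a) = (1 - γ) * B := by
    rw [occ_pair]
  have hD : |∑ s, wh s * Δ s| ≤ c * C * B + c * ε_approx * (1 - γ)⁻¹ := by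
    calc |∑ s, wh s * Δ s| ≤ ∑ s, |wh s * Δ s| := Finset.abs_sum_le_sum_abs _ _
      _ ≤ ∑ s, wh s * ∑ a, π s a * (c * (C * U s a + ε_approx)) := by
          refine Finset.sum_le_sum fun s _ => ?_
          rw [abs_mul, abs_of_nonneg (hwh0 s)]
          exact mul_le_mul_of_nonneg_left (hΔ s) (hwh0 s)
      _ = c * C * B + c * ε_approx * ∑ s, wh s := by
          have hin : ∀ s, ∑ a, π s a * (c * (C * U s a + ε_approx))
              = c * C * ∑ a, π s a * U s a + c * ε_approx := by
            intro s
            have : ∀ a, π s a * (c * (C * U s a + ε_approx))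
                = c * C * (π s a * U s a) + c * ε_approx * π s a := fun a => by ring
            rw [Finset.sum_congr rfl fun a _ => this a, Finset.sum_add_distrib,
              ← Finset.mul_sum, ← Finset.mul_sum, hπ.2 s, mul_one]
          rw [Finset.sum_congr rfl fun s (_ : s ∈ Finset.univ) => by rw [hin s]]
          rw [Finset.sum_congr rfl fun s (_ : s ∈ Finset.univ) =>
            (mul_add (wh s) (c * C * ∑ a, π s a * U s a) (c * ε_approx) : _)]
          rw [Finset.sum_add_distrib, hBdef, Finset.mul_sum, Finset.mul_sum, ← Finset.sum_mul]
          congr 1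
          · exact Finset.sum_congr rfl fun s _ => by ring
          · rw [Finset.sum_mul]
            exact Finset.sum_congr rfl fun s _ => mul_comm _ _
      _ = c * C * B + c * ε_approx * (1 - γ)⁻¹ := by
          rw [dvec_sum hγ0 hγ1 hμ hPh]
  -- assemble
  rw [eT, eH, eJU]
  have lhs_eq : (1 - γ) * ∑ s, μ₀ s * v s
      - (1 - γ) * (∑ s, μ₀ s * v s - γ * ∑ s, wh s * Δ s)
      = (1 - γ) * γ * ∑ s, wh s * Δ s := by ring
  rw [lhs_eq, abs_mul, abs_of_pos (by positivity : (0:ℝ) < (1 - γ) * γ)]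
  calc (1 - γ) * γ * |∑ s, wh s * Δ s|
      ≤ (1 - γ) * γ * (c * C * B + c * ε_approx * (1 - γ)⁻¹) :=
        mul_le_mul_of_nonneg_left hD (by positivity)
    _ = γ * c * C * ((1 - γ) * B) + γ * c * ε_approx := by
        field_simp


lemma occ_nonneg {γ : ℝ} (hγ0 : 0 < γ) (hγ1 : γ < 1) {μ₀ : S → ℝ} (hμ : ProbVec μ₀)
    {K : S → A → S → ℝ} (hK : IsKernel K) {π : S → A → ℝ} (hπ : IsPolicy π) (s : S) (a : A) :
    0 ≤ occupancy γ μ₀ K π s a := by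
  rw [occupancy_eq]
  exact mul_nonneg (by linarith)
    (mul_nonneg (dvec_nonneg hγ0 hμ (stoch_stateMatrix hK hπ) s) (hπ.1 s a))

lemma occ_total {γ : ℝ} (hγ0 : 0 < γ) (hγ1 : γ < 1) {μ₀ : S → ℝ} (hμ : ProbVec μ₀)
    {K : S → A → S → ℝ} (hK : IsKernel K) {π : S → A → ℝ} (hπ : IsPolicy π) :
    ∑ s, ∑ a, occupancy γ μ₀ K π s a = 1 := by
  have h := occ_pair (γ := γ) (μ₀ := μ₀) K π (fun _ _ => (1:ℝ))
  simp only [mul_one] at h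
  rw [h]
  have : ∀ s, dvec γ μ₀ (stateMatrix K π) s * (∑ a, π s a) = dvec γ μ₀ (stateMatrix K π) s := by
    intro s; rw [hπ.2 s, mul_one]
  rw [Finset.sum_congr rfl fun s _ => this s, dvec_sum hγ0 hγ1 hμ (stoch_stateMatrix hK hπ)]
  rw [mul_inv_cancel₀ (by linarith : (1:ℝ) - γ ≠ 0)]

lemma weighted_diff_le (ρ : S → A → ℝ) (hρ0 : ∀ s a, 0 ≤ ρ s a)
    (htot : ∑ s, ∑ a, ρ s a = 1) (g h : S → A → ℝ) {ε : ℝ}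
    (hgh : ∀ s a, |g s a - h s a| ≤ ε) :
    |(∑ s, ∑ a, ρ s a * g s a) - ∑ s, ∑ a, ρ s a * h s a| ≤ ε := by
  have e : (∑ s, ∑ a, ρ s a * g s a) - ∑ s, ∑ a, ρ s a * h s a
      = ∑ s, ∑ a, ρ s a * (g s a - h s a) := by
    rw [← Finset.sum_sub_distrib]
    refine Finset.sum_congr rfl fun s _ => ?_
    rw [← Finset.sum_sub_distrib]
    exact Finset.sum_congr rfl fun a _ => by ring
  rw [e]
  calc |∑ s, ∑ a, ρ s a * (g s a - h s a)| ≤ ∑ s, |∑ a, ρ s a * (g s a - h s a)| :=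
        Finset.abs_sum_le_sum_abs _ _
    _ ≤ ∑ s, ∑ a, |ρ s a * (g s a - h s a)| :=
        Finset.sum_le_sum fun s _ => Finset.abs_sum_le_sum_abs _ _
    _ ≤ ∑ s, ∑ a, ρ s a * ε := by
        refine Finset.sum_le_sum fun s _ => Finset.sum_le_sum fun a _ => ?_
        rw [abs_mul, abs_of_nonneg (hρ0 s a)]
        exact mul_le_mul_of_nonneg_left (hgh s a) (hρ0 s a)
    _ = 1 * ε := by
        rw [← htot, Finset.sum_mul]
        exact Finset.sum_congr rfl fun s _ => by rw [Finset.sum_mul]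
    _ = ε := one_mul ε

end Sim

end OGap

open OGap in
/-- Theorem 2 (Optimality Gap with Density Error). -/
theorem optimality_gap {S A : Type*} [Fintype S] [Fintype A]
    [DecidableEq S] [Nonempty S] [Nonempty A]
    (γ : ℝ) (hγ0 : 0 < γ) (hγ1 : γ < 1)
    (r_max : ℝ) (hr_max : 0 < r_max)
    (c : ℝ) (hc : c = r_max / (1 - γ))
    (μ₀ : S → ℝ) (hμ0 : ∀ x, 0 ≤ μ₀ x) (hμ1 : ∑ x, μ₀ x = 1)
    (T That : S → A → S → ℝ) (hT : IsKernel T) (hThat : IsKernel That)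
    (r : S → A → ℝ) (hr : ∀ s a, |r s a| ≤ r_max)
    (u uhat : S → A → ℝ) (ε_density : ℝ) (hεd : 0 ≤ ε_density)
    (hu : ∀ s' a, |u s' a - uhat s' a| ≤ ε_density)
    (U Uhat : S → A → ℝ)
    (hU : ∀ s a, U s a = ∑ s', That s a s' * u s' a)
    (hUhat : ∀ s a, Uhat s a = ∑ s', That s a s' * uhat s' a)
    (C : ℝ) (hC : 0 < C) (ε_approx : ℝ) (hεa : 0 ≤ ε_approx)
    (hmodel : ∀ s a, ∀ f : S → ℝ, (∀ s', |f s'| ≤ 1) →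
      |∑ s', (That s a s' - T s a s') * f s'| ≤ C * U s a + ε_approx)
    (lam : ℝ) (hlam : lam = γ * c * C)
    (πhat : S → A → ℝ) (hπhat : IsPolicy πhat)
    (hopt : ∀ π : S → A → ℝ, IsPolicy π →
      (∑ s, ∑ a, occupancy γ μ₀ That πhat s a * (r s a - lam * Uhat s a)) ≥
        ∑ s, ∑ a, occupancy γ μ₀ That π s a * (r s a - lam * Uhat s a)) :
    ∀ δ : ℝ, 0 ≤ δ → ∀ π : S → A → ℝ, IsPolicy π →
      (∑ s, ∑ a, occupancy γ μ₀ That π s a * U s a) ≤ δ + ε_density →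
      (∑ s, ∑ a, occupancy γ μ₀ T πhat s a * r s a) ≥
        (∑ s, ∑ a, occupancy γ μ₀ T π s a * r s a) -
          2 * lam * (δ + 2 * ε_density) - 2 * γ * c * ε_approx := by
  intro δ hδ π hπ hJU
  have hμ : ProbVec μ₀ := ⟨hμ0, hμ1⟩
  have hc0 : (0:ℝ) < c := by rw [hc]; apply div_pos hr_max; linarith
  have hlam0 : 0 ≤ lam := by rw [hlam]; positivity
  -- pointwise bound |U - Uhat| ≤ ε_density
  have hεU : ∀ s a, |U s a - Uhat s a| ≤ ε_density := by
    intro s a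
    rw [hU, hUhat, ← Finset.sum_sub_distrib]
    calc |∑ s', (That s a s' * u s' a - That s a s' * uhat s' a)|
        ≤ ∑ s', |That s a s' * u s' a - That s a s' * uhat s' a| :=
          Finset.abs_sum_le_sum_abs _ _
      _ ≤ ∑ s', That s a s' * ε_density := by
          refine Finset.sum_le_sum fun s' _ => ?_
          rw [← mul_sub, abs_mul, abs_of_nonneg (hThat.1 s a s')]
          exact mul_le_mul_of_nonneg_left (hu s' a) (hThat.1 s a s')
      _ = ε_density := by rw [← Finset.sum_mul, hThat.2 s a, one_mul]
  -- simulation bounds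
  have A1 := sim_bound γ hγ0 hγ1 r_max hr_max c hc μ₀ hμ T That hT hThat r hr U C hC
    ε_approx hεa hmodel πhat hπhat
  have A2 := sim_bound γ hγ0 hγ1 r_max hr_max c hc μ₀ hμ T That hT hThat r hr U C hC
    ε_approx hεa hmodel π hπ
  -- density error bounds
  have B1 := weighted_diff_le (occupancy γ μ₀ That πhat)
    (occ_nonneg hγ0 hγ1 hμ hThat hπhat) (occ_total hγ0 hγ1 hμ hThat hπhat) U Uhat hεU
  have B2 := weighted_diff_le (occupancy γ μ₀ That π)
    (occ_nonneg hγ0 hγ1 hμ hThat hπ) (occ_total hγ0 hγ1 hμ hThat hπ) U Uhat hεU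
  -- expand the regularized objective
  have expand : ∀ π' : S → A → ℝ,
      (∑ s, ∑ a, occupancy γ μ₀ That π' s a * (r s a - lam * Uhat s a))
        = (∑ s, ∑ a, occupancy γ μ₀ That π' s a * r s a)
          - lam * ∑ s, ∑ a, occupancy γ μ₀ That π' s a * Uhat s a := by
    intro π'
    rw [Finset.mul_sum, ← Finset.sum_sub_distrib]
    refine Finset.sum_congr rfl fun s _ => ?_
    rw [Finset.mul_sum, ← Finset.sum_sub_distrib]
    exact Finset.sum_congr rfl fun a _ => by ring
  have O := hopt π hπ
  rw [expand πhat, expand π] at O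
  -- scalar abbreviations
  set ηTh := ∑ s, ∑ a, occupancy γ μ₀ T πhat s a * r s a
  set ηHh := ∑ s, ∑ a, occupancy γ μ₀ That πhat s a * r s a
  set ηTp := ∑ s, ∑ a, occupancy γ μ₀ T π s a * r s a
  set ηHp := ∑ s, ∑ a, occupancy γ μ₀ That π s a * r s a
  set JUh := ∑ s, ∑ a, occupancy γ μ₀ That πhat s a * U s a
  set JUp := ∑ s, ∑ a, occupancy γ μ₀ That π s a * U s a
  set JHh := ∑ s, ∑ a, occupancy γ μ₀ That πhat s a * Uhat s a
  set JHp := ∑ s, ∑ a, occupancy γ μ₀ That π s a * Uhat s a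
  rw [← hlam] at A1 A2
  have a1 := (abs_le.mp A1).1
  have a2 := (abs_le.mp A2).2
  have b1 := (abs_le.mp B1).2
  have b2 := (abs_le.mp B2).1
  -- multiply by lam ≥ 0
  have m1 : lam * (JUh - JHh) ≤ lam * ε_density := mul_le_mul_of_nonneg_left b1 hlam0
  have m2 : lam * (-ε_density) ≤ lam * (JUp - JHp) := mul_le_mul_of_nonneg_left b2 hlam0
  have m3 : lam * JUp ≤ lam * (δ + ε_density) := mul_le_mul_of_nonneg_left hJU hlam0
  have hγcε : 0 ≤ γ * c * ε_approx := by positivity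
  nlinarith [a1, a2, m1, m2, m3, O]
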